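/- Let R = ℂ[[h]] be the ring of formal power series over ℂ and M = R² the free R-module with basis e₁,e₂. Suppose ·ₕ is an R-bilinear operation on M making (M,·ₕ) a Novikov algebra over R (i.e. for all x,y,z ∈ M: (x·ₕy)·ₕz − (y·ₕx)·ₕz = x·ₕ(y·ₕz) − y·ₕ(x·ₕz) and (x·ₕy)·ₕz = (x·ₕz)·ₕy), and that e₁·ₕe₂ − e₂·ₕe₁ − h e₂ ∈ h²M. Then there exist E₁, E₂ ∈ M and a,b ∈ R such that E₁ − e₁ ∈ hM and E₂ − e₂ ∈ hM, and E₁·ₕE₁ = a E₁ + b E₂, E₁·ₕE₂ = (a+h) E₂, E₂·ₕE₁ = a E₂, E₂·ₕE₂ = 0. -/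

import Mathlib

/-- If ·ₕ is an ℂ[[h]]-bilinear Novikov product on M = ℂ[[h]]² with
e₁·ₕe₂ − e₂·ₕe₁ ≡ h e₂ (mod h²M), then there is a basis-like pair E₁ ≡ e₁, E₂ ≡ e₂ (mod hM)
and a, b ∈ ℂ[[h]] with E₁·ₕE₁ = a E₁ + b E₂, E₁·ₕE₂ = (a+h) E₂, E₂·ₕE₁ = a E₂,
E₂·ₕE₂ = 0. -/
theorem stmt_17
    (mul : (Fin 2 → PowerSeries ℂ) →ₗ[PowerSeries ℂ]
        (Fin 2 → PowerSeries ℂ) →ₗ[PowerSeries ℂ] (Fin 2 → PowerSeries ℂ))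
    (hls : ∀ x y z : Fin 2 → PowerSeries ℂ,
        mul (mul x y) z - mul (mul y x) z = mul x (mul y z) - mul y (mul x z))
    (hrc : ∀ x y z : Fin 2 → PowerSeries ℂ, mul (mul x y) z = mul (mul x z) y)
    (e₁ e₂ : Fin 2 → PowerSeries ℂ) (he₁ : e₁ = ![1, 0]) (he₂ : e₂ = ![0, 1])
    (hcom : ∃ m : Fin 2 → PowerSeries ℂ,
        mul e₁ e₂ - mul e₂ e₁ - (PowerSeries.X : PowerSeries ℂ) • e₂ = ((PowerSeries.X : PowerSeries ℂ) ^ 2) • m) :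
    ∃ (E₁ E₂ : Fin 2 → PowerSeries ℂ) (a b : PowerSeries ℂ),
      (∃ m : Fin 2 → PowerSeries ℂ, E₁ - e₁ = (PowerSeries.X : PowerSeries ℂ) • m) ∧
      (∃ m : Fin 2 → PowerSeries ℂ, E₂ - e₂ = (PowerSeries.X : PowerSeries ℂ) • m) ∧
      mul E₁ E₁ = a • E₁ + b • E₂ ∧
      mul E₁ E₂ = (a + PowerSeries.X) • E₂ ∧
      mul E₂ E₁ = a • E₂ ∧
      mul E₂ E₂ = 0 := by
  letI : Algebra ℕ (PowerSeries ℂ) := Semiring.toNatAlgebra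
  letI : Algebra ℤ (PowerSeries ℂ) := Ring.toIntAlgebra _
  obtain ⟨m, hm⟩ := hcom
  set X : PowerSeries ℂ := PowerSeries.X with hXdef
  set μ₀ : PowerSeries ℂ := m 0 with hμ₀
  set μ₁ : PowerSeries ℂ := m 1 with hμ₁
  -- basic scalars
  have hXne : X ≠ 0 := PowerSeries.X_ne_zero
  have h2ne : (2 : PowerSeries ℂ) ≠ 0 := by
    intro h
    have := congrArg (PowerSeries.constantCoeff (R := ℂ)) h
    rw [map_ofNat, map_zero] at this
    norm_num at this
  have h2Xne : (2 * X : PowerSeries ℂ) ≠ 0 := mul_ne_zero h2ne hXne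
  -- the vector c
  set c : Fin 2 → PowerSeries ℂ := (X * μ₀) • e₁ + (1 + X * μ₁) • e₂ with hc
  have hmv : m = μ₀ • e₁ + μ₁ • e₂ := by
    funext i
    fin_cases i <;> simp [he₁, he₂, hμ₀, hμ₁]
  have hce : c - e₂ = X • m := by
    rw [hc, hmv]
    module
  have hc1ne : (1 + X * μ₁ : PowerSeries ℂ) ≠ 0 := by
    intro h
    have := congrArg (PowerSeries.constantCoeff (R := ℂ)) h
    simp [hXdef] at this
  set w : PowerSeries ℂ := (1 + X * μ₁)⁻¹ with hwdef
  have hw : w * (1 + X * μ₁) = 1 := by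
    apply PowerSeries.inv_mul_cancel
    simp [hXdef]
  have hwne : w ≠ 0 := by
    intro h
    rw [h, zero_mul] at hw
    exact zero_ne_one hw
  set f : Fin 2 → PowerSeries ℂ := w • e₁ with hf
  -- representations in the basis (f, c)
  have hrepr : ∀ v : Fin 2 → PowerSeries ℂ, ∃ A B : PowerSeries ℂ, v = A • f + B • c := by
    intro v
    refine ⟨(1 + X * μ₁) * v 0 - (X * μ₀) * v 1, w * v 1, ?_⟩
    funext i
    fin_cases i
    · simp [hf, hc, he₁, he₂]
      linear_combination (-(v 0)) * hw
    · simp [hf, hc, he₁, he₂]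
      linear_combination (-(v 1)) * hw
  have huniq : ∀ A B A' B' : PowerSeries ℂ, A • f + B • c = A' • f + B' • c → A = A' ∧ B = B' := by
    intro A B A' B' h
    have h0 := congrFun h 0
    have h1 := congrFun h 1
    simp [hf, hc, he₁, he₂] at h0 h1
    have hB : B = B' := h1.resolve_right hc1ne
    refine ⟨mul_right_cancel₀ hwne ?_, hB⟩
    linear_combination h0 - (X * μ₀) * hB
  -- representations of the four products
  obtain ⟨p₁, p₂, hP⟩ := hrepr (mul f f)
  obtain ⟨q₁, q₂, hQ⟩ := hrepr (mul f c)
  obtain ⟨r₁, r₂, hR⟩ := hrepr (mul c f)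
  obtain ⟨s₁, s₂, hS⟩ := hrepr (mul c c)
  -- the bracket relation [f,c] = X • c
  have hbr0 : mul e₁ e₂ = mul e₂ e₁ + X • e₂ + (X ^ 2 * μ₀) • e₁ + (X ^ 2 * μ₁) • e₂ := by
    rw [hmv] at hm
    linear_combination (norm := module) hm
  have hQR : mul f c - mul c f = X • c := by
    rw [hf, hc]
    simp only [map_add, map_smul, LinearMap.add_apply, LinearMap.smul_apply]
    rw [hbr0]
    match_scalars
    · ring
    · ring
    · linear_combination (X + X ^ 2 * μ₁) * hw
    · linear_combination (X ^ 2 * μ₀) * hw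
  -- scalar consequences of the bracket relation
  have tb := hQR
  rw [hQ, hR] at tb
  obtain ⟨hbq₁, hbq₂⟩ := huniq q₁ q₂ r₁ (r₂ + X) (by linear_combination (norm := module) tb)
  -- Novikov identity (f∘f)∘c = (f∘c)∘f
  have t1 := hrc f f c
  rw [hP, hQ] at t1
  simp only [map_add, map_smul, LinearMap.add_apply, LinearMap.smul_apply] at t1
  rw [hP, hQ, hR, hS] at t1
  obtain ⟨hV1a, hV1b⟩ := huniq (p₁*q₁ + p₂*s₁) (p₁*q₂ + p₂*s₂) (q₁*p₁ + q₂*r₁) (q₁*p₂ + q₂*r₂)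
    (by linear_combination (norm := module) t1)
  -- Novikov identity (c∘f)∘c = (c∘c)∘f
  have t2 := hrc c f c
  rw [hR, hS] at t2
  simp only [map_add, map_smul, LinearMap.add_apply, LinearMap.smul_apply] at t2
  rw [hP, hQ, hR, hS] at t2
  obtain ⟨hV2a, hV2b⟩ := huniq (r₁*q₁ + r₂*s₁) (r₁*q₂ + r₂*s₂) (s₁*p₁ + s₂*r₁) (s₁*p₂ + s₂*r₂)
    (by linear_combination (norm := module) t2)
  -- left symmetry at (f, c, f)
  have t3 := hls f c f
  rw [hQ, hR, hP] at t3
  simp only [map_add, map_smul, LinearMap.add_apply, LinearMap.smul_apply] at t3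
  rw [hP, hQ, hR, hS] at t3
  obtain ⟨hV3a, hV3b⟩ := huniq (q₁*p₁ + q₂*r₁ - (r₁*p₁ + r₂*r₁)) (q₁*p₂ + q₂*r₂ - (r₁*p₂ + r₂*r₂))
    (r₁*p₁ + r₂*q₁ - (p₁*r₁ + p₂*s₁)) (r₁*p₂ + r₂*q₂ - (p₁*r₂ + p₂*s₂))
    (by linear_combination (norm := module) t3)
  -- left symmetry at (f, c, c)
  have t4 := hls f c c
  rw [hQ, hR, hS] at t4
  simp only [map_add, map_smul, LinearMap.add_apply, LinearMap.smul_apply] at t4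
  rw [hP, hQ, hR, hS] at t4
  obtain ⟨hV4a, hV4b⟩ := huniq (q₁*q₁ + q₂*s₁ - (r₁*q₁ + r₂*s₁)) (q₁*q₂ + q₂*s₂ - (r₁*q₂ + r₂*s₂))
    (s₁*p₁ + s₂*q₁ - (q₁*r₁ + q₂*s₁)) (s₁*p₂ + s₂*q₂ - (q₁*r₂ + q₂*s₂))
    (by linear_combination (norm := module) t4)
  -- eliminate q₁, q₂
  simp only [hbq₁, hbq₂] at hV1a hV1b hV2a hV2b hV3a hV3b hV4a hV4b
  have hcancel : ∀ t u : PowerSeries ℂ, t ≠ 0 → t * u = 0 → u = 0 :=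
    fun t u ht h => (mul_eq_zero.mp h).resolve_left ht
  have hr₁ : r₁ = 0 := by
    refine hcancel (2*X) r₁ h2Xne ?_
    linear_combination hV3a - hV1a
  have hs₁ : s₁ = 0 := by
    refine hcancel (2*X) s₁ h2Xne ?_
    linear_combination hV4a - hV2a
  have hs₂ : s₂ = 0 := by
    refine hcancel X s₂ hXne ?_
    linear_combination hV4b + p₂ * hs₁ - r₂ * hr₁
  have hpr : p₁ = r₂ := by
    have h0 : X * (p₁ - r₂) = 0 := by linear_combination hV1b - hV3b
    exact sub_eq_zero.mp (hcancel X (p₁ - r₂) hXne h0)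
  refine ⟨f, c, r₂, p₂, ⟨(-(w * μ₁)) • e₁, ?_⟩, ⟨m, hce⟩, ?_, ?_, ?_, ?_⟩
  · funext i
    fin_cases i
    · simp [hf, he₁]
      linear_combination hw
    · simp [hf, he₁]
  · rw [hP, hpr]
  · rw [hQ, hbq₁, hr₁, hbq₂]
    module
  · rw [hR, hr₁]
    module
  · rw [hS, hs₁, hs₂]
    module
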